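/- Let λ = p/q ∈ (0,1) with p, q coprime, p ≥ 2. Define a sequence of rationals by g₁ = q/p and g_{i+1} = (g_i − ⌊g_i⌋)·(q/p). Then for every i ≥ 1, the reduced denominator of g_i is p^i; consequently all g_i are pairwise distinct and none is an integer. -/
import Mathlib


/-- for `λ = p/q` with `p, q` coprime, `p ≥ 2`, `q > p`, the sequence
`g₁ = q/p`, `g_{i+1} = (g_i - ⌊g_i⌋)·(q/p)` has reduced denominators `p^i`; hence all its
terms are pairwise distinct and none is an integer. -/
theorem stmt12 (p q : ℕ) (hco : Nat.Coprime p q) (hp : 2 ≤ p) (hq : p < q)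
    (g : ℕ → ℚ) (hg0 : g 0 = (q : ℚ) / p)
    (hgs : ∀ n, g (n + 1) = (g n - (⌊g n⌋ : ℚ)) * ((q : ℚ) / p)) :
    (∀ n, (g n).den = p ^ (n + 1)) ∧ Function.Injective g ∧ ∀ n, (g n).den ≠ 1 := by
  have hp0 : (p : ℚ) ≠ 0 := by positivity
  have hcoZ : IsCoprime (q : ℤ) (p : ℤ) := by
    rw [Int.isCoprime_iff_gcd_eq_one]
    simpa [Int.gcd, Nat.coprime_comm] using hco
  -- main induction: g n = m / p^(n+1) with m coprime to p
  have key : ∀ n, ∃ m : ℤ, IsCoprime m (p : ℤ) ∧ g n = (m : ℚ) / (p : ℚ) ^ (n + 1) := by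
    intro n
    induction n with
    | zero => exact ⟨(q : ℤ), hcoZ, by simpa using hg0⟩
    | succ n ih =>
      obtain ⟨m, hm, hgn⟩ := ih
      refine ⟨(m - ⌊g n⌋ * (p : ℤ) ^ (n + 1)) * q, ?_, ?_⟩
      · refine IsCoprime.mul_left ?_ hcoZ
        have : m - ⌊g n⌋ * (p : ℤ) ^ (n + 1) = m + (-(⌊g n⌋ * (p : ℤ) ^ n)) * p := by ring
        rw [this]
        exact hm.add_mul_right_left _
      · rw [hgs n, hgn]
        push_cast
        field_simp
        ring
  have hden : ∀ n, (g n).den = p ^ (n + 1) := by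
    intro n
    obtain ⟨m, hm, hgn⟩ := key n
    have hb0 : (0 : ℤ) < (p : ℤ) ^ (n + 1) := by positivity
    have hcop : Nat.Coprime m.natAbs ((p : ℤ) ^ (n + 1)).natAbs := by
      have h1 : Nat.Coprime m.natAbs p := by
        rw [Int.isCoprime_iff_gcd_eq_one] at hm
        simpa [Int.gcd] using hm
      simpa [Int.natAbs_pow] using h1.pow_right (n + 1)
    have h2 := Rat.den_div_eq_of_coprime hb0 hcop
    have h3 : (((p : ℤ) ^ (n + 1) : ℤ) : ℚ) = (p : ℚ) ^ (n + 1) := by push_cast; ring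
    rw [h3] at h2
    rw [hgn]
    exact_mod_cast h2
  refine ⟨hden, ?_, ?_⟩
  · intro a b hab
    have : p ^ (a + 1) = p ^ (b + 1) := by rw [← hden a, ← hden b, hab]
    have := Nat.pow_right_injective hp this
    omega
  · intro n h
    have := hden n
    rw [h] at this
    have : p ≤ 1 := by
      by_contra hc
      have : 1 < p ^ (n + 1) := Nat.one_lt_pow (by omega) (by omega)
      omega
    omega
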